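/- A piecewise constant function on the Clough–Tocher split of a triangle T (three subtriangles sharing an interior point) is uniquely determined by its integrals against affine functions on T; equivalently, any u ∈ P¹(T) is uniquely determined by its integrals over the three subtriangles of the split, since their barycenters are not collinear. -/

import Mathlib

open Matrix MeasureTheory Set

noncomputable section
namespace Stmt19

def S2 : Set (Fin 2 → ℝ) := {y | 0 ≤ y 0 ∧ 0 ≤ y 1 ∧ y 0 + y 1 ≤ 1}

lemma S2_meas : MeasurableSet S2 := by
  have h0 : Measurable fun y : Fin 2 → ℝ => y 0 := measurable_pi_apply 0
  have h1 : Measurable fun y : Fin 2 → ℝ => y 1 := measurable_pi_apply 1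
  exact (measurableSet_le measurable_const h0).inter
    ((measurableSet_le measurable_const h1).inter
      (measurableSet_le (h0.add h1) measurable_const))

lemma S2_compact : IsCompact S2 := by
  have hsub : S2 ⊆ Icc (fun _ => 0) (fun _ => 1) := by
    rintro y ⟨h0, h1, h2⟩
    constructor <;> intro i <;> fin_cases i <;> simp <;> linarith
  refine IsCompact.of_isClosed_subset isCompact_Icc ?_ hsub
  have h0 : Continuous fun y : Fin 2 → ℝ => y 0 := continuous_apply 0
  have h1 : Continuous fun y : Fin 2 → ℝ => y 1 := continuous_apply 1
  exact (isClosed_le continuous_const h0).inter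
    ((isClosed_le continuous_const h1).inter (isClosed_le (h0.add h1) continuous_const))

lemma S2_integrableOn {f : (Fin 2 → ℝ) → ℝ} (hf : Continuous f) : IntegrableOn f S2 :=
  hf.continuousOn.integrableOn_compact S2_compact

def al : ℝ := (volume S2).toReal
def be (j : Fin 2) : ℝ := ∫ y in S2, y j

lemma volU_pos : 0 < volume {y : Fin 2 → ℝ | 0 < y 0 ∧ 0 < y 1 ∧ y 0 + y 1 < 1} := by
  have h0 : Continuous fun y : Fin 2 → ℝ => y 0 := continuous_apply 0
  have h1 : Continuous fun y : Fin 2 → ℝ => y 1 := continuous_apply 1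
  have hopen : IsOpen {y : Fin 2 → ℝ | 0 < y 0 ∧ 0 < y 1 ∧ y 0 + y 1 < 1} :=
    (isOpen_lt continuous_const h0).inter
      ((isOpen_lt continuous_const h1).inter (isOpen_lt (h0.add h1) continuous_const))
  refine hopen.measure_pos volume ⟨fun _ => 1/4, by norm_num⟩

lemma U_sub : {y : Fin 2 → ℝ | 0 < y 0 ∧ 0 < y 1 ∧ y 0 + y 1 < 1} ⊆ S2 := by
  rintro y ⟨h0, h1, h2⟩; exact ⟨h0.le, h1.le, h2.le⟩

lemma al_pos : 0 < al := by
  refine ENNReal.toReal_pos ?_ S2_compact.measure_lt_top.ne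
  exact (volU_pos.trans_le (measure_mono U_sub)).ne'

lemma be_pos (j : Fin 2) : 0 < be j := by
  rw [be]
  refine (setIntegral_pos_iff_support_of_nonneg_ae ?_ ?_).2 ?_
  · refine ae_restrict_of_forall_mem S2_meas ?_
    rintro y ⟨h0, h1, h2⟩
    fin_cases j <;> simpa
  · exact S2_integrableOn (continuous_apply j)
  · refine lt_of_lt_of_le volU_pos (measure_mono ?_)
    rintro y ⟨h0, h1, h2⟩
    refine ⟨?_, U_sub ⟨h0, h1, h2⟩⟩
    fin_cases j <;> simp [Function.mem_support] <;> positivity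

lemma S2_integral_affine (a : ℝ) (h : Fin 2 → ℝ) :
    ∫ y in S2, (a + h ⬝ᵥ y) = a * al + h 0 * be 0 + h 1 * be 1 := by
  have i0 : IntegrableOn (fun y : Fin 2 → ℝ => h 0 * y 0) S2 :=
    S2_integrableOn (continuous_const.mul (continuous_apply 0))
  have i1 : IntegrableOn (fun y : Fin 2 → ℝ => h 1 * y 1) S2 :=
    S2_integrableOn (continuous_const.mul (continuous_apply 1))
  have ic : IntegrableOn (fun _ : Fin 2 → ℝ => a) S2 :=
    S2_integrableOn continuous_const
  have hdp : ∀ y : Fin 2 → ℝ, a + h ⬝ᵥ y = a + (h 0 * y 0 + h 1 * y 1) := by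
    intro y; simp [dotProduct, Fin.sum_univ_two]
  simp_rw [hdp]
  have e1 : ∫ y in S2, (a + (h 0 * y 0 + h 1 * y 1)) =
      (∫ _ in S2, a) + ∫ y in S2, (h 0 * y 0 + h 1 * y 1) := integral_add ic (i0.add i1)
  have e2 : ∫ y in S2, (h 0 * y 0 + h 1 * y 1) =
      (∫ y in S2, h 0 * y 0) + ∫ y in S2, h 1 * y 1 := integral_add i0 i1
  rw [e1, e2, MeasureTheory.integral_const_mul, MeasureTheory.integral_const_mul, setIntegral_const, be, be, smul_eq_mul, al]
  rw [measureReal_def]; ring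

end Stmt19

namespace Stmt19
open Stmt19

lemma S2_convex : Convex ℝ S2 := by
  have l0 : IsLinearMap ℝ fun y : Fin 2 → ℝ => y 0 := ⟨fun a b => rfl, fun c a => rfl⟩
  have l1 : IsLinearMap ℝ fun y : Fin 2 → ℝ => y 1 := ⟨fun a b => rfl, fun c a => rfl⟩
  have ls : IsLinearMap ℝ fun y : Fin 2 → ℝ => y 0 + y 1 :=
    ⟨fun a b => by simp; ring, fun c a => by simp; ring⟩
  exact (convex_halfSpace_ge l0 0).inter
    ((convex_halfSpace_ge l1 0).inter (convex_halfSpace_le ls 1))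

lemma S2_eq_hull :
    S2 = convexHull ℝ {0, Pi.single 0 (1:ℝ), Pi.single 1 (1:ℝ)} := by
  apply Subset.antisymm
  · intro y hy
    obtain ⟨h0, h1, h2⟩ := hy
    rw [convexHull_insert ⟨_, mem_insert _ _⟩, mem_convexJoin]
    rcases eq_or_lt_of_le (by linarith : (0:ℝ) ≤ y 0 + y 1) with hs | hs
    · refine ⟨0, rfl, Pi.single 0 1, ?_, ?_⟩
      · rw [convexHull_pair]; exact left_mem_segment _ _ _
      · have : y = 0 := by
          funext i; fin_cases i <;> simp <;> linarith
        rw [this]; exact left_mem_segment _ _ _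
    · set s := y 0 + y 1 with hsdef
      refine ⟨0, rfl, ((y 0 / s) • (Pi.single 0 1 : Fin 2 → ℝ) + (y 1 / s) • (Pi.single 1 1 : Fin 2 → ℝ)), ?_, ?_⟩
      · rw [convexHull_pair]
        exact ⟨y 0 / s, y 1 / s, by positivity, by positivity, by field_simp; exact hsdef.symm, rfl⟩
      · refine ⟨1 - s, s, by linarith, by linarith, by ring, ?_⟩
        funext i; fin_cases i <;>
          simp [Pi.single_apply] <;> field_simp
  · apply convexHull_min ?_ S2_convex
    rintro x (rfl | rfl | rfl) <;> constructor <;> simp <;> norm_num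

/-- The affine map `y ↦ p + M *ᵥ y`. -/
def phiMap (p : Fin 2 → ℝ) (M : Matrix (Fin 2) (Fin 2) ℝ) :
    (Fin 2 → ℝ) →ᵃ[ℝ] (Fin 2 → ℝ) :=
  AffineMap.mk' (fun y => p + M *ᵥ y) M.mulVecLin 0 (by
    intro y; simp [Matrix.mulVecLin]; constructor <;> ring)

end Stmt19

namespace Stmt19

lemma tri_integral (p q r : Fin 2 → ℝ)
    (hdet : (q 0 - p 0) * (r 1 - p 1) - (r 0 - p 0) * (q 1 - p 1) ≠ 0) (a : ℝ) (g : Fin 2 → ℝ) :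
    ∫ x in convexHull ℝ {p, q, r}, (a + g ⬝ᵥ x) =
      |(q 0 - p 0) * (r 1 - p 1) - (r 0 - p 0) * (q 1 - p 1)| *
        ((a + g ⬝ᵥ p) * al + (g ⬝ᵥ q - g ⬝ᵥ p) * be 0 + (g ⬝ᵥ r - g ⬝ᵥ p) * be 1) := by
  set M : Matrix (Fin 2) (Fin 2) ℝ := Matrix.of fun i j => ![q i - p i, r i - p i] j with hM
  have hMdet : M.det = (q 0 - p 0) * (r 1 - p 1) - (r 0 - p 0) * (q 1 - p 1) := by
    rw [Matrix.det_fin_two]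
    simp [hM]
  have hinj : Function.Injective (M.mulVec) := by
    rw [Matrix.mulVec_injective_iff_isUnit, Matrix.isUnit_iff_isUnit_det, hMdet]
    exact isUnit_iff_ne_zero.2 hdet
  set Lc : (Fin 2 → ℝ) →L[ℝ] (Fin 2 → ℝ) := LinearMap.toContinuousLinearMap M.mulVecLin with hLc
  have hLcapp : ∀ y, Lc y = M *ᵥ y := fun y => rfl
  have himg : (fun y => p + M *ᵥ y) '' S2 = convexHull ℝ {p, q, r} := by
    have h1 : (fun y => p + M *ᵥ y) '' S2 =
        phiMap p M '' (convexHull ℝ {0, Pi.single 0 (1:ℝ), Pi.single 1 (1:ℝ)}) := by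
      rw [S2_eq_hull]; rfl
    rw [h1, AffineMap.image_convexHull]
    congr 1
    have e0 : phiMap p M 0 = p := by
      show p + M *ᵥ 0 = p
      simp
    have e1 : phiMap p M (Pi.single 0 (1:ℝ)) = q := by
      show p + M *ᵥ Pi.single 0 (1:ℝ) = q
      funext i
      simp [hM]
    have e2 : phiMap p M (Pi.single 1 (1:ℝ)) = r := by
      show p + M *ᵥ Pi.single 1 (1:ℝ) = r
      funext i
      simp [hM]
    rw [image_insert_eq, image_insert_eq, image_singleton, e0, e1, e2]
  have hder : ∀ x ∈ S2, HasFDerivWithinAt (fun y => p + M *ᵥ y) Lc S2 x := by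
    intro x _
    have : HasFDerivAt (fun y => p + Lc y) Lc x := Lc.hasFDerivAt.const_add p
    simpa only [hLcapp] using this.hasFDerivWithinAt
  have hinj' : Set.InjOn (fun y => p + M *ᵥ y) S2 := fun y1 _ y2 _ h =>
    hinj (by simpa using h)
  have hIOn := integral_image_eq_integral_abs_det_fderiv_smul volume S2_meas hder hinj'
    (fun x => a + g ⬝ᵥ x)
  have hLcdet : Lc.det = M.det := by
    rw [ContinuousLinearMap.det, hLc, LinearMap.coe_toContinuousLinearMap,
      ← Matrix.toLin'_apply', LinearMap.det_toLin']
  rw [← himg, hIOn]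
  simp only [hLcdet, hMdet, smul_eq_mul]
  have hform : ∀ y : Fin 2 → ℝ,
      |(q 0 - p 0) * (r 1 - p 1) - (r 0 - p 0) * (q 1 - p 1)| *
        (a + g ⬝ᵥ (p + M *ᵥ y)) =
      |(q 0 - p 0) * (r 1 - p 1) - (r 0 - p 0) * (q 1 - p 1)| *
        ((a + g ⬝ᵥ p) + (g ᵥ* M) ⬝ᵥ y) := by
    intro y
    congr 1
    simp [Matrix.mulVec, Matrix.vecMul, dotProduct, Fin.sum_univ_two, hM]
    ring
  simp_rw [hform]
  rw [MeasureTheory.integral_const_mul, S2_integral_affine]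
  have hv0 : (g ᵥ* M) 0 = g ⬝ᵥ q - g ⬝ᵥ p := by
    simp [Matrix.vecMul, dotProduct, Fin.sum_univ_two, hM]; ring
  have hv1 : (g ᵥ* M) 1 = g ⬝ᵥ r - g ⬝ᵥ p := by
    simp [Matrix.vecMul, dotProduct, Fin.sum_univ_two, hM]; ring
  rw [hv0, hv1]

end Stmt19

namespace Stmt19

lemma det_ne_zero {v : Fin 3 → (Fin 2 → ℝ)} (hv : AffineIndependent ℝ v) :
    (v 1 0 - v 0 0) * (v 2 1 - v 0 1) - (v 2 0 - v 0 0) * (v 1 1 - v 0 1) ≠ 0 := by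
  intro hD
  have h20 : v 2 ≠ v 0 := fun h => by simpa using hv.injective h
  obtain ⟨k, hk⟩ := Function.ne_iff.1 h20
  set w : Fin 3 → ℝ := ![v 1 k - v 2 k, v 2 k - v 0 k, v 0 k - v 1 k] with hw
  have hsum : ∑ i ∈ Finset.univ, w i = 0 := by
    simp [hw, Fin.sum_univ_three]; try ring
  have hcomb : ∑ i ∈ Finset.univ, w i • v i = 0 := by
    funext m
    have : ∑ i ∈ Finset.univ, w i * v i m = 0 := by
      rw [Fin.sum_univ_three]
      simp only [hw]
      simp only [Matrix.cons_val_zero, Matrix.cons_val_one, Matrix.head_cons,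
        Matrix.cons_val_two, Matrix.tail_cons]
      fin_cases k <;> fin_cases m <;>
        simp only [Fin.mk_zero, Fin.mk_one, Fin.isValue] <;>
        [ring; linear_combination -hD; linear_combination hD; ring]
    simpa [Fin.sum_univ_three] using this
  have := affineIndependent_iff.1 hv Finset.univ w hsum hcomb 1 (Finset.mem_univ 1)
  rw [hw] at this
  simp at this
  exact hk (by linarith [this])

end Stmt19


open Stmt19

/-- Let `T` be a nondegenerate triangle with vertices `v` and
`z` an interior point, and let the Clough–Tocher split consist of the three
subtriangles `T_i = conv{z, v_{i+1}, v_{i+2}}`.  An affine function on `T` is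
uniquely determined by its integrals over the three subtriangles (the pairing
between `P⁰` of the split and `P¹(T)` is nondegenerate in the first argument),
and, equivalently, a piecewise constant function on the split is uniquely
determined by its integrals against affine functions on `T`. -/
theorem stmt_19 (v : Fin 3 → (Fin 2 → ℝ)) (hv : AffineIndependent ℝ v)
    (z : Fin 2 → ℝ) (hz : z ∈ interior (convexHull ℝ (Set.range v))) :
    (∀ (a : ℝ) (g : Fin 2 → ℝ),
      (∀ i : Fin 3,
        (∫ x in convexHull ℝ {z, v (i + 1), v (i + 2)}, (a + g ⬝ᵥ x)) = 0) →
      a = 0 ∧ g = 0)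
    ∧ ∀ c : Fin 3 → ℝ,
      (∀ (a : ℝ) (g : Fin 2 → ℝ),
        (∑ i : Fin 3,
          c i * ∫ x in convexHull ℝ {z, v (i + 1), v (i + 2)}, (a + g ⬝ᵥ x)) = 0) →
      c = 0 := by
  classical
  have f01 : ((0:Fin 3)+1) = 1 := rfl
  have f02 : ((0:Fin 3)+2) = 2 := rfl
  have f11 : ((1:Fin 3)+1) = 2 := rfl
  have f12 : ((1:Fin 3)+2) = 0 := rfl
  have f21 : ((2:Fin 3)+1) = 0 := rfl
  have f22 : ((2:Fin 3)+2) = 1 := rfl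
  have htop : affineSpan ℝ (Set.range v) = ⊤ := by
    rw [hv.affineSpan_eq_top_iff_card_eq_finrank_add_one]
    simp
  set b : AffineBasis (Fin 3) ℝ (Fin 2 → ℝ) := ⟨v, hv, htop⟩ with hbdef
  have htpos : ∀ i, 0 < b.coord i z := by
    have h := b.interior_convexHull
    have hr : Set.range ⇑b = Set.range v := rfl
    rw [hr] at h
    rw [h] at hz
    exact hz
  set t : Fin 3 → ℝ := fun i => b.coord i z with htdef
  have htsum : ∑ i, t i = 1 := b.sum_coord_apply_eq_one z
  have hzc : ∑ i, t i • v i = z := b.linear_combination_coord_eq_self z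
  have hz0 : z 0 = t 0 * v 0 0 + t 1 * v 1 0 + t 2 * v 2 0 := by
    have h := congrFun hzc 0
    simpa [Fin.sum_univ_three] using h.symm
  have hz1 : z 1 = t 0 * v 0 1 + t 1 * v 1 1 + t 2 * v 2 1 := by
    have h := congrFun hzc 1
    simpa [Fin.sum_univ_three] using h.symm
  have ht2 : t 2 = 1 - t 0 - t 1 := by
    have h := htsum; rw [Fin.sum_univ_three] at h; linarith
  have hD : (v 1 0 - v 0 0) * (v 2 1 - v 0 1) - (v 2 0 - v 0 0) * (v 1 1 - v 0 1) ≠ 0 :=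
    det_ne_zero hv
  set D : ℝ := (v 1 0 - v 0 0) * (v 2 1 - v 0 1) - (v 2 0 - v 0 0) * (v 1 1 - v 0 1) with hDdef
  have hd0 : (v 1 0 - z 0) * (v 2 1 - z 1) - (v 2 0 - z 0) * (v 1 1 - z 1) = t 0 * D := by
    rw [hz0, hz1, ht2, hDdef]; ring
  have hd1 : (v 2 0 - z 0) * (v 0 1 - z 1) - (v 0 0 - z 0) * (v 2 1 - z 1) = t 1 * D := by
    rw [hz0, hz1, ht2, hDdef]; ring
  have hd2 : (v 0 0 - z 0) * (v 1 1 - z 1) - (v 1 0 - z 0) * (v 0 1 - z 1) = t 2 * D := by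
    rw [hz0, hz1, ht2, hDdef]; ring
  have hdets : ∀ i : Fin 3,
      (v (i+1) 0 - z 0) * (v (i+2) 1 - z 1) - (v (i+2) 0 - z 0) * (v (i+1) 1 - z 1) = t i * D := by
    intro i
    fin_cases i
    · exact hd0
    · exact hd1
    · exact hd2
  have hint : ∀ (i : Fin 3) (a : ℝ) (g : Fin 2 → ℝ),
      (∫ x in convexHull ℝ {z, v (i+1), v (i+2)}, (a + g ⬝ᵥ x)) =
        (t i * |D|) * ((a + g ⬝ᵥ z) * al + (g ⬝ᵥ v (i+1) - g ⬝ᵥ z) * be 0 +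
          (g ⬝ᵥ v (i+2) - g ⬝ᵥ z) * be 1) := by
    intro i a g
    rw [tri_integral z (v (i+1)) (v (i+2))
      (by rw [hdets i]; exact mul_ne_zero (htpos i).ne' hD) a g, hdets i, abs_mul,
      abs_of_pos (htpos i)]
  have hKpos : (0:ℝ) < |D| := abs_pos.2 hD
  constructor
  · intro a g h
    have e : ∀ i : Fin 3, (a + g ⬝ᵥ z) * al + (g ⬝ᵥ v (i+1) - g ⬝ᵥ z) * be 0 +
        (g ⬝ᵥ v (i+2) - g ⬝ᵥ z) * be 1 = 0 := by
      intro i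
      have hi := h i
      rw [hint i a g] at hi
      exact (mul_eq_zero.1 hi).resolve_left (mul_pos (htpos i) hKpos).ne'
    have e0 := e 0; have e1 := e 1; have e2 := e 2
    rw [f01, f02] at e0
    rw [f11, f12] at e1
    rw [f21, f22] at e2
    have hPkey : (g ⬝ᵥ v 1 - g ⬝ᵥ v 0) * (be 0 * be 1 + (be 0 - be 1)^2) = 0 := by
      linear_combination be 1 * (e0 - e1) + (be 0 - be 1) * (e0 - e2)
    have hQkey : (g ⬝ᵥ v 2 - g ⬝ᵥ v 0) * (be 0 * be 1 + (be 0 - be 1)^2) = 0 := by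
      linear_combination be 0 * (e0 - e2) + (be 1 - be 0) * (e0 - e1)
    have hbpos : (0:ℝ) < be 0 * be 1 + (be 0 - be 1)^2 :=
      add_pos_of_pos_of_nonneg (mul_pos (be_pos 0) (be_pos 1)) (sq_nonneg _)
    have hPz : g ⬝ᵥ v 1 - g ⬝ᵥ v 0 = 0 := (mul_eq_zero.1 hPkey).resolve_right hbpos.ne'
    have hQz : g ⬝ᵥ v 2 - g ⬝ᵥ v 0 = 0 := (mul_eq_zero.1 hQkey).resolve_right hbpos.ne'
    have hP' : g 0 * (v 1 0 - v 0 0) + g 1 * (v 1 1 - v 0 1) = 0 := by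
      simp only [dotProduct, Fin.sum_univ_two] at hPz
      linear_combination hPz
    have hQ' : g 0 * (v 2 0 - v 0 0) + g 1 * (v 2 1 - v 0 1) = 0 := by
      simp only [dotProduct, Fin.sum_univ_two] at hQz
      linear_combination hQz
    have hg0 : g 0 = 0 := by
      have key : g 0 * D = 0 := by
        rw [hDdef]
        linear_combination (v 2 1 - v 0 1) * hP' - (v 1 1 - v 0 1) * hQ'
      exact (mul_eq_zero.1 key).resolve_right hD
    have hg1 : g 1 = 0 := by
      have key : g 1 * D = 0 := by
        rw [hDdef]
        linear_combination (v 1 0 - v 0 0) * hQ' - (v 2 0 - v 0 0) * hP'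
      exact (mul_eq_zero.1 key).resolve_right hD
    have hgz : g = 0 := by
      funext j; fin_cases j
      · exact hg0
      · exact hg1
    refine ⟨?_, hgz⟩
    rw [hgz] at e0
    simp only [zero_dotProduct, add_zero, sub_zero, zero_mul, sub_self] at e0
    have : a * al = 0 := by linear_combination e0
    exact (mul_eq_zero.1 this).resolve_right al_pos.ne'
  · intro c hc
    have hS := hc 1 0
    have hX0 := hc 0 (Pi.single 0 1)
    have hX1 := hc 0 (Pi.single 1 1)
    rw [Fin.sum_univ_three] at hS hX0 hX1
    rw [hint 0 1 0, hint 1 1 0, hint 2 1 0, f01, f02, f11, f12, f21, f22] at hS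
    rw [hint 0 0 (Pi.single 0 1), hint 1 0 (Pi.single 0 1), hint 2 0 (Pi.single 0 1),
      f01, f02, f11, f12, f21, f22] at hX0
    rw [hint 0 0 (Pi.single 1 1), hint 1 0 (Pi.single 1 1), hint 2 0 (Pi.single 1 1),
      f01, f02, f11, f12, f21, f22] at hX1
    simp only [zero_dotProduct, single_dotProduct, one_mul, zero_add, add_zero,
      sub_self, zero_mul, mul_zero] at hS hX0 hX1
    have hsumd : c 0 * t 0 + c 1 * t 1 + c 2 * t 2 = 0 := by
      have h' : (c 0 * t 0 + c 1 * t 1 + c 2 * t 2) * (|D| * al) = 0 := by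
        linear_combination hS
      exact (mul_eq_zero.1 h').resolve_right (mul_pos hKpos al_pos).ne'
    have hX0' : c 0 * t 0 * (z 0 * al + (v 1 0 - z 0) * be 0 + (v 2 0 - z 0) * be 1) +
        c 1 * t 1 * (z 0 * al + (v 2 0 - z 0) * be 0 + (v 0 0 - z 0) * be 1) +
        c 2 * t 2 * (z 0 * al + (v 0 0 - z 0) * be 0 + (v 1 0 - z 0) * be 1) = 0 := by
      have h' : (c 0 * t 0 * (z 0 * al + (v 1 0 - z 0) * be 0 + (v 2 0 - z 0) * be 1) +
          c 1 * t 1 * (z 0 * al + (v 2 0 - z 0) * be 0 + (v 0 0 - z 0) * be 1) +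
          c 2 * t 2 * (z 0 * al + (v 0 0 - z 0) * be 0 + (v 1 0 - z 0) * be 1)) * |D| = 0 := by
        linear_combination hX0
      exact (mul_eq_zero.1 h').resolve_right hKpos.ne'
    have hX1' : c 0 * t 0 * (z 1 * al + (v 1 1 - z 1) * be 0 + (v 2 1 - z 1) * be 1) +
        c 1 * t 1 * (z 1 * al + (v 2 1 - z 1) * be 0 + (v 0 1 - z 1) * be 1) +
        c 2 * t 2 * (z 1 * al + (v 0 1 - z 1) * be 0 + (v 1 1 - z 1) * be 1) = 0 := by
      have h' : (c 0 * t 0 * (z 1 * al + (v 1 1 - z 1) * be 0 + (v 2 1 - z 1) * be 1) +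
          c 1 * t 1 * (z 1 * al + (v 2 1 - z 1) * be 0 + (v 0 1 - z 1) * be 1) +
          c 2 * t 2 * (z 1 * al + (v 0 1 - z 1) * be 0 + (v 1 1 - z 1) * be 1)) * |D| = 0 := by
        linear_combination hX1
      exact (mul_eq_zero.1 h').resolve_right hKpos.ne'
    set w : Fin 3 → ℝ := ![be 1 * (c 1 * t 1) + be 0 * (c 2 * t 2),
      be 0 * (c 0 * t 0) + be 1 * (c 2 * t 2),
      be 1 * (c 0 * t 0) + be 0 * (c 1 * t 1)] with hwdef
    have hwsum : ∑ i ∈ Finset.univ, w i = 0 := by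
      rw [hwdef]
      simp only [Fin.sum_univ_three, Matrix.cons_val_zero, Matrix.cons_val_one, Matrix.head_cons,
        Matrix.cons_val_two, Matrix.tail_cons]
      linear_combination (be 0 + be 1) * hsumd
    have hwcomb : ∑ i ∈ Finset.univ, w i • v i = 0 := by
      funext k
      have hk : ∑ i ∈ Finset.univ, w i * v i k = 0 := by
        rw [Fin.sum_univ_three, hwdef]
        simp only [Matrix.cons_val_zero, Matrix.cons_val_one, Matrix.head_cons,
          Matrix.cons_val_two, Matrix.tail_cons]
        fin_cases k
        · simp only [Fin.mk_zero, Fin.isValue]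
          linear_combination hX0' - (al - be 0 - be 1) * z 0 * hsumd
        · simp only [Fin.mk_one, Fin.isValue]
          linear_combination hX1' - (al - be 0 - be 1) * z 1 * hsumd
      simpa [Fin.sum_univ_three] using hk
    have hw := affineIndependent_iff.1 hv Finset.univ w hwsum hwcomb
    have hw0 : be 1 * (c 1 * t 1) + be 0 * (c 2 * t 2) = 0 := hw 0 (Finset.mem_univ _)
    have hw1 : be 0 * (c 0 * t 0) + be 1 * (c 2 * t 2) = 0 := hw 1 (Finset.mem_univ _)
    have hw2 : be 1 * (c 0 * t 0) + be 0 * (c 1 * t 1) = 0 := hw 2 (Finset.mem_univ _)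
    have hbe3 : (0:ℝ) < be 0 ^ 3 + be 1 ^ 3 :=
      add_pos (pow_pos (be_pos 0) 3) (pow_pos (be_pos 1) 3)
    have hc0 : c 0 * t 0 = 0 := by
      have key : c 0 * t 0 * (be 0 ^ 3 + be 1 ^ 3) = 0 := by
        linear_combination be 0 ^ 2 * hw1 - be 0 * be 1 * hw0 + be 1 ^ 2 * hw2
      exact (mul_eq_zero.1 key).resolve_right hbe3.ne'
    have hc1 : c 1 * t 1 = 0 := by
      have key : c 1 * t 1 * (be 0 ^ 3 + be 1 ^ 3) = 0 := by
        linear_combination be 0 ^ 2 * hw2 - be 0 * be 1 * hw1 + be 1 ^ 2 * hw0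
      exact (mul_eq_zero.1 key).resolve_right hbe3.ne'
    have hc2 : c 2 * t 2 = 0 := by
      have key : c 2 * t 2 * (be 0 ^ 3 + be 1 ^ 3) = 0 := by
        linear_combination be 0 ^ 2 * hw0 - be 0 * be 1 * hw2 + be 1 ^ 2 * hw1
      exact (mul_eq_zero.1 key).resolve_right hbe3.ne'
    funext i
    fin_cases i
    · exact (mul_eq_zero.1 hc0).resolve_right (htpos 0).ne'
    · exact (mul_eq_zero.1 hc1).resolve_right (htpos 1).ne'
    · exact (mul_eq_zero.1 hc2).resolve_right (htpos 2).ne'
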